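/- Let f : ℝ^m → ℝ be C³, fix α > 1 and pairwise distinct real numbers δ_0, …, δ_m, and consider the (Euclidean) New Q-Newton iteration: if ∇f(x_n) = 0 set x_{n+1} = x_n; otherwise set A_n = ∇²f(x_n) + δ_{j_n}‖∇f(x_n)‖^α · Id where j_n is the smallest index in {0,…,m} making A_n invertible, and x_{n+1} = x_n − |A_n|⁻¹ ∇f(x_n). Let z be a point with ∇f(z) = 0 and ∇²f(z) positive definite (a non-degenerate local minimum). Then there exist ε > 0 and C > 0 such that for every initial point x₀ with ‖x₀ − z‖ < ε, the sequence (x_n) converges to z and the rate of convergence is quadratic: ‖x_{n+1} − z‖ ≤ C‖x_n − z‖² for all n. -/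

import Mathlib

open Gradient RealInnerProductSpace

/-- `AbsInvApply A g w` says that `w = |A|⁻¹ g`, where `|A|` is the unique symmetric
positive-definite square root `P` of `A²` (for `A` an invertible symmetric operator);
equivalently `|A|⁻¹ g = pr₊(A⁻¹g) − pr₋(A⁻¹g)` with `pr₊, pr₋` the orthogonal projections
onto the sums of positive, resp. negative, eigenspaces of `A`. -/
def AbsInvApply {E : Type*} [NormedAddCommGroup E] [InnerProductSpace ℝ E]
    (A : E →L[ℝ] E) (g w : E) : Prop :=
  ∃ P : E →L[ℝ] E, (∀ u u' : E, ⟪P u, u'⟫ = ⟪u, P u'⟫) ∧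
    (∀ u : E, u ≠ 0 → 0 < ⟪P u, u⟫) ∧ P.comp P = A.comp A ∧ P w = g

/-- `(x n)` is a (Euclidean) New Q-Newton iteration sequence for `f` with exponent `α` and
perturbation parameters `δs 0, …, δs m`: if `∇f(x n) = 0` then `x (n+1) = x n`; otherwise
`x (n+1) = x n − |A n|⁻¹ ∇f(x n)` with
`A n = ∇²f(x n) + δs (j n) ‖∇f(x n)‖^α · Id`, `j n` the smallest index making `A n`
invertible. -/
def NewQNewtonSeq {m : ℕ} (f : EuclideanSpace ℝ (Fin m) → ℝ) (α : ℝ)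
    (δs : Fin (m + 1) → ℝ) (x : ℕ → EuclideanSpace ℝ (Fin m)) : Prop :=
  ∀ n : ℕ,
    (∇ f (x n) = 0 → x (n + 1) = x n) ∧
    (∇ f (x n) ≠ 0 → ∃ (j : Fin (m + 1)) (w : EuclideanSpace ℝ (Fin m)),
      IsUnit (fderiv ℝ (fun y => ∇ f y) (x n) +
        (δs j * ‖∇ f (x n)‖ ^ α) • ContinuousLinearMap.id ℝ (EuclideanSpace ℝ (Fin m))) ∧
      (∀ i : Fin (m + 1), i < j →
        ¬ IsUnit (fderiv ℝ (fun y => ∇ f y) (x n) +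
          (δs i * ‖∇ f (x n)‖ ^ α) •
            ContinuousLinearMap.id ℝ (EuclideanSpace ℝ (Fin m)))) ∧
      AbsInvApply (fderiv ℝ (fun y => ∇ f y) (x n) +
        (δs j * ‖∇ f (x n)‖ ^ α) • ContinuousLinearMap.id ℝ (EuclideanSpace ℝ (Fin m)))
        (∇ f (x n)) w ∧
      x (n + 1) = x n - w)

section AuxLemmas

variable {m : ℕ}

local notation "E" => EuclideanSpace ℝ (Fin m)

/-- Uniqueness of the symmetric positive-definite square root. -/
lemma posdef_sqrt_unique (P A : E →L[ℝ] E)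
    (hPsym : ∀ u v : E, ⟪P u, v⟫ = ⟪u, P v⟫) (hPpos : ∀ u : E, u ≠ 0 → 0 < ⟪P u, u⟫)
    (hAsym : ∀ u v : E, ⟪A u, v⟫ = ⟪u, A v⟫) (hApos : ∀ u : E, u ≠ 0 → 0 < ⟪A u, u⟫)
    (h : P.comp P = A.comp A) : P = A := by
  let S : E →ₗ[ℝ] E := (P : E →ₗ[ℝ] E) - (A : E →ₗ[ℝ] E)
  have hSsym : S.IsSymmetric := by
    intro u v
    simp only [S, LinearMap.sub_apply, ContinuousLinearMap.coe_coe, inner_sub_left,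
      inner_sub_right, hPsym, hAsym]
  have hn : Module.finrank ℝ E = m := finrank_euclideanSpace_fin
  set b := hSsym.eigenvectorBasis hn with hb
  have hkey : ∀ i : Fin m, S (b i) = 0 := by
    intro i
    have happ := hSsym.apply_eigenvectorBasis hn i
    set μ := hSsym.eigenvalues hn i
    set v : E := b i with hv
    have hvne : v ≠ 0 := (b.toBasis.ne_zero i : _)
    have hsum : P (S v) + S (A v) = 0 := by
      have := congrArg (fun T : E →L[ℝ] E => T v) h
      simp only [ContinuousLinearMap.comp_apply] at this
      simp only [S, LinearMap.sub_apply, ContinuousLinearMap.coe_coe, map_sub]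
      rw [this]; abel
    have h0 : μ * (⟪P v, v⟫ + ⟪A v, v⟫) = 0 := by
      have e1 : ⟪P (S v), v⟫ = μ * ⟪P v, v⟫ := by
        rw [happ, map_smul, real_inner_smul_left]; norm_cast
      have e2 : ⟪S (A v), v⟫ = μ * ⟪A v, v⟫ := by
        rw [hSsym (A v) v, happ, real_inner_smul_right]; norm_cast
      have : ⟪P (S v) + S (A v), v⟫ = (0 : ℝ) := by rw [hsum]; simp
      rw [inner_add_left, e1, e2] at this
      linarith [this]
    have hpos : 0 < ⟪P v, v⟫ + ⟪A v, v⟫ := by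
      have := hPpos v hvne; have := hApos v hvne; linarith
    have hμ : μ = 0 := by
      rcases mul_eq_zero.mp h0 with h' | h'
      · exact h'
      · exact absurd h' (ne_of_gt hpos)
    rw [happ, hμ]; simp
  have hS0 : S = 0 := b.toBasis.ext fun i => by simp [hkey i]
  have : (P : E →ₗ[ℝ] E) = (A : E →ₗ[ℝ] E) := by
    have := sub_eq_zero.mp hS0
    exact this
  exact ContinuousLinearMap.coe_injective this

/-- Positive-definite operators are uniformly bounded below on Euclidean space. -/
lemma exists_posdef_lower_bound (T : E →L[ℝ] E)
    (h : ∀ u : E, u ≠ 0 → 0 < ⟪T u, u⟫) : ∃ c > 0, ∀ u : E, c * ‖u‖ ^ 2 ≤ ⟪T u, u⟫ := by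
  have hcont : Continuous fun u : E => ⟪T u, u⟫ := T.continuous.inner continuous_id
  rcases (Metric.sphere (0 : E) 1).eq_empty_or_nonempty with hemp | hne
  · refine ⟨1, one_pos, fun u => ?_⟩
    have hu : u = 0 := by
      by_contra hu
      have : (‖u‖⁻¹ • u) ∈ Metric.sphere (0 : E) 1 := by
        simp [norm_smul, abs_of_nonneg, inv_mul_cancel₀ (norm_ne_zero_iff.mpr hu)]
      rw [hemp] at this; exact this
    simp [hu]
  · obtain ⟨u₀, hu₀s, hmin⟩ := (isCompact_sphere (0 : E) 1).exists_isMinOn hne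
      hcont.continuousOn
    have hu₀ : ‖u₀‖ = 1 := by simpa using hu₀s
    have hu₀ne : u₀ ≠ 0 := by intro h0; rw [h0] at hu₀; simp at hu₀
    refine ⟨⟪T u₀, u₀⟫, h u₀ hu₀ne, fun u => ?_⟩
    rcases eq_or_ne u 0 with rfl | hu
    · simp
    · have hnu : (0 : ℝ) < ‖u‖ := norm_pos_iff.mpr hu
      have hmem : (‖u‖⁻¹ • u) ∈ Metric.sphere (0 : E) 1 := by
        simp [norm_smul, abs_of_nonneg, inv_mul_cancel₀ (ne_of_gt hnu)]
      have hle : ⟪T u₀, u₀⟫ ≤ ⟪T (‖u‖⁻¹ • u), ‖u‖⁻¹ • u⟫ := hmin hmem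
      have hval : ⟪T (‖u‖⁻¹ • u), ‖u‖⁻¹ • u⟫ = ‖u‖⁻¹ * (‖u‖⁻¹ * ⟪T u, u⟫) := by
        rw [map_smul, real_inner_smul_left, real_inner_smul_right]
      rw [hval] at hle
      have h2 : ⟪T u₀, u₀⟫ * ‖u‖ ^ 2 ≤ ‖u‖⁻¹ * (‖u‖⁻¹ * ⟪T u, u⟫) * ‖u‖ ^ 2 := by
        exact mul_le_mul_of_nonneg_right hle (by positivity)
      calc ⟪T u₀, u₀⟫ * ‖u‖ ^ 2 ≤ ‖u‖⁻¹ * (‖u‖⁻¹ * ⟪T u, u⟫) * ‖u‖ ^ 2 := h2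
        _ = ⟪T u, u⟫ := by
            have key : ∀ t : ℝ, ‖u‖⁻¹ * (‖u‖⁻¹ * t) * ‖u‖ ^ 2 = t := fun t => by
              rw [pow_two]; field_simp
            exact key _

lemma grad_eq (f : E → ℝ) :
    (fun y : E => ∇ f y) =
      fun y => (InnerProductSpace.toDual ℝ E).symm (fderiv ℝ f y) := rfl

lemma grad_contDiff (f : E → ℝ) (hf : ContDiff ℝ 3 f) :
    ContDiff ℝ 2 (fun y : E => ∇ f y) := by
  rw [grad_eq]
  have h1 : ContDiff ℝ 2 (fderiv ℝ f) := hf.fderiv_right (by norm_num)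
  exact ((InnerProductSpace.toDual ℝ E).symm.toContinuousLinearEquiv
    : StrongDual ℝ E ≃L[ℝ] E).toContinuousLinearMap.contDiff.comp h1

lemma hessian_symm (f : E → ℝ) (hf : ContDiff ℝ 3 f) (x u v : E) :
    ⟪fderiv ℝ (fun y => ∇ f y) x u, v⟫ = ⟪u, fderiv ℝ (fun y => ∇ f y) x v⟫ := by
  set L := ((InnerProductSpace.toDual ℝ E).symm.toContinuousLinearEquiv
    : StrongDual ℝ E ≃L[ℝ] E).toContinuousLinearMap with hL
  have hdf : ContDiff ℝ 2 (fderiv ℝ f) := hf.fderiv_right (by norm_num)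
  have hdf1 : DifferentiableAt ℝ (fderiv ℝ f) x := (hdf.differentiable (by norm_num)) x
  set f'' := fderiv ℝ (fderiv ℝ f) x with hf''
  have hcomp : fderiv ℝ (fun y => ∇ f y) x = L.comp f'' := by
    rw [grad_eq]
    have : (fun y : E => (InnerProductSpace.toDual ℝ E).symm (fderiv ℝ f y))
        = fun y => L (fderiv ℝ f y) := by
      funext y; simp [L]
    rw [this]
    exact (L.hasFDerivAt.comp x hdf1.hasFDerivAt).fderiv
  have hsymm : ∀ a b : E, f'' a b = f'' b a := by
    intro a b
    exact second_derivative_symmetric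
      (fun y => ((hf.differentiable (by norm_num)) y).hasFDerivAt)
      hdf1.hasFDerivAt a b
  have happ : ∀ a b : E, ⟪fderiv ℝ (fun y => ∇ f y) x a, b⟫ = f'' a b := by
    intro a b
    rw [hcomp]
    simp only [ContinuousLinearMap.comp_apply, L,
      ContinuousLinearEquiv.coe_coe, LinearIsometryEquiv.coe_toContinuousLinearEquiv]
    exact InnerProductSpace.toDual_symm_apply
  rw [happ, real_inner_comm, happ, hsymm]

end AuxLemmas

set_option maxHeartbeats 1000000 in
/-- Let `f : ℝ^m → ℝ` be `C³`, `α > 1`, `δ_0, …, δ_m` pairwise distinct.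
If `z` is a non-degenerate local minimum of `f` (`∇f(z) = 0` and `∇²f(z)` positive definite),
then there are `ε > 0` and `C > 0` such that every New Q-Newton sequence starting at a point
`x₀` with `‖x₀ − z‖ < ε` converges to `z` with quadratic rate:
`‖x_{n+1} − z‖ ≤ C ‖x_n − z‖²`. -/
theorem newQNewton_local_quadratic_convergence
    {m : ℕ} (f : EuclideanSpace ℝ (Fin m) → ℝ) (hf : ContDiff ℝ 3 f)
    (α : ℝ) (hα : 1 < α)
    (δs : Fin (m + 1) → ℝ) (hδs : Function.Injective δs)
    (z : EuclideanSpace ℝ (Fin m)) (hz : ∇ f z = 0)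
    (hposdef : ∀ u : EuclideanSpace ℝ (Fin m), u ≠ 0 →
      0 < ⟪fderiv ℝ (fun y => ∇ f y) z u, u⟫) :
    ∃ ε > 0, ∃ C > 0, ∀ x : ℕ → EuclideanSpace ℝ (Fin m),
      ‖x 0 - z‖ < ε → NewQNewtonSeq f α δs x →
        Filter.Tendsto x Filter.atTop (nhds z) ∧
          ∀ n, ‖x (n + 1) - z‖ ≤ C * ‖x n - z‖ ^ 2 := by
  
  have hα0 : (0 : ℝ) < α := lt_trans one_pos hα
  have hGc : ContDiff ℝ 2 (fun y => ∇ f y) := grad_contDiff f hf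
  have hGdiff : Differentiable ℝ (fun y => ∇ f y) := hGc.differentiable (by norm_num)
  have hGcont : Continuous (fun y => ∇ f y) := hGc.continuous
  have hHc1 : ContDiff ℝ 1 (fun y => fderiv ℝ (fun y' => ∇ f y') y) :=
    hGc.fderiv_right (by norm_num)
  have hHcont : Continuous (fun y => fderiv ℝ (fun y' => ∇ f y') y) := hHc1.continuous
  -- lower bound at z
  obtain ⟨c, hc, hlow⟩ := exists_posdef_lower_bound (fderiv ℝ (fun y => ∇ f y) z) hposdef
  -- bound on the δs
  set D : ℝ := 1 + ∑ j, |δs j| with hD_def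
  have hD1 : (1 : ℝ) ≤ D := le_add_of_nonneg_right (Finset.sum_nonneg fun j _ => abs_nonneg _)
  have hD0 : (0 : ℝ) < D := lt_of_lt_of_le one_pos hD1
  have hD : ∀ j, |δs j| ≤ D := fun j =>
    le_add_of_nonneg_of_le zero_le_one
      (Finset.single_le_sum (f := fun j => |δs j|) (fun i _ => abs_nonneg _) (Finset.mem_univ j))
  -- local Lipschitz bound for the Hessian
  obtain ⟨K, t, ht, hKlip⟩ : ∃ K : NNReal, ∃ t ∈ nhds z,
      LipschitzOnWith K (fun y => fderiv ℝ (fun y' => ∇ f y') y) t :=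
    hHc1.contDiffAt.exists_lipschitzOnWith
  obtain ⟨r₃, hr₃, hr₃t⟩ := Metric.mem_nhds_iff.mp ht
  -- radius where Hessian close to Hessian at z
  obtain ⟨r₁, hr₁, hr₁p⟩ : ∃ r₁ > 0, ∀ x₁ : EuclideanSpace ℝ (Fin m), dist x₁ z < r₁ →
      ‖fderiv ℝ (fun y => ∇ f y) x₁ - fderiv ℝ (fun y => ∇ f y) z‖ < c / 4 := by
    have := Metric.continuousAt_iff.mp (hHcont.continuousAt (x := z)) (c / 4) (by positivity)
    obtain ⟨d, hd, hdp⟩ := this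
    exact ⟨d, hd, fun x₁ hx₁ => by
      have := hdp hx₁; rwa [dist_eq_norm] at this⟩
  -- radius where D * ‖∇f‖ ^ α < c / 4
  obtain ⟨r₂, hr₂, hr₂p⟩ : ∃ r₂ > 0, ∀ x₁ : EuclideanSpace ℝ (Fin m), dist x₁ z < r₂ →
      D * ‖∇ f x₁‖ ^ α < c / 4 := by
    have hφ : ContinuousAt (fun x₁ : EuclideanSpace ℝ (Fin m) => D * ‖∇ f x₁‖ ^ α) z := by
      apply ContinuousAt.mul continuousAt_const
      exact (Real.continuousAt_rpow_const _ _ (Or.inr (le_of_lt hα0))).comp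
        (hGcont.norm.continuousAt (x := z))
    have hval : D * ‖∇ f z‖ ^ α = 0 := by
      rw [hz]; simp [Real.zero_rpow (ne_of_gt hα0)]
    have := Metric.continuousAt_iff.mp hφ (c / 4) (by positivity)
    obtain ⟨d, hd, hdp⟩ := this
    refine ⟨d, hd, fun x₁ hx₁ => ?_⟩
    have := hdp hx₁
    rw [Real.dist_eq, hval, sub_zero] at this
    calc D * ‖∇ f x₁‖ ^ α ≤ |D * ‖∇ f x₁‖ ^ α| := le_abs_self _
      _ < c / 4 := this
  -- radius where ‖∇f‖ ≤ 1
  obtain ⟨r₄, hr₄, hr₄p⟩ : ∃ r₄ > 0, ∀ x₁ : EuclideanSpace ℝ (Fin m), dist x₁ z < r₄ →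
      ‖∇ f x₁‖ ≤ 1 := by
    have := Metric.continuousAt_iff.mp (hGcont.continuousAt (x := z)) 1 one_pos
    obtain ⟨d, hd, hdp⟩ := this
    refine ⟨d, hd, fun x₁ hx₁ => ?_⟩
    have := hdp hx₁
    rw [dist_eq_norm, hz, sub_zero] at this
    exact le_of_lt this
  -- the radius
  set r : ℝ := min r₁ (min r₂ (min r₃ (min r₄ (min 1 (c / (2 * (K + 1))))))) with hr_def
  have hKpos : (0 : ℝ) < (K : ℝ) + 1 := by positivity
  have hr : 0 < r := by
    refine lt_min hr₁ (lt_min hr₂ (lt_min hr₃ (lt_min hr₄ (lt_min one_pos ?_))))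
    positivity
  have hrr₁ : r ≤ r₁ := min_le_left _ _
  have hrr₂ : r ≤ r₂ := le_trans (min_le_right _ _) (min_le_left _ _)
  have hrr₃ : r ≤ r₃ := le_trans (min_le_right _ _) (le_trans (min_le_right _ _)
    (min_le_left _ _))
  have hrr₄ : r ≤ r₄ := le_trans (min_le_right _ _) (le_trans (min_le_right _ _)
    (le_trans (min_le_right _ _) (min_le_left _ _)))
  have hr1 : r ≤ 1 := le_trans (min_le_right _ _) (le_trans (min_le_right _ _)
    (le_trans (min_le_right _ _) (le_trans (min_le_right _ _) (min_le_left _ _))))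
  have hrK : r ≤ c / (2 * ((K : ℝ) + 1)) := le_trans (min_le_right _ _)
    (le_trans (min_le_right _ _) (le_trans (min_le_right _ _)
      (le_trans (min_le_right _ _) (min_le_right _ _))))
  -- operator norm bound on the Hessian in the ball
  set M : ℝ := ‖fderiv ℝ (fun y => ∇ f y) z‖ + c / 4 with hM_def
  have hM0 : 0 < M := by positivity
  have hMb : ∀ x₁ : EuclideanSpace ℝ (Fin m), ‖x₁ - z‖ < r →
      ‖fderiv ℝ (fun y => ∇ f y) x₁‖ ≤ M := by
    intro x₁ hx₁
    have h1 := hr₁p x₁ (by rw [dist_eq_norm]; exact lt_of_lt_of_le hx₁ hrr₁)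
    have heq : fderiv ℝ (fun y => ∇ f y) x₁ =
        (fderiv ℝ (fun y => ∇ f y) x₁ - fderiv ℝ (fun y => ∇ f y) z) +
          fderiv ℝ (fun y => ∇ f y) z := by abel
    calc ‖fderiv ℝ (fun y => ∇ f y) x₁‖
        ≤ ‖fderiv ℝ (fun y => ∇ f y) x₁ - fderiv ℝ (fun y => ∇ f y) z‖ +
          ‖fderiv ℝ (fun y => ∇ f y) z‖ := by nth_rewrite 1 [heq]; exact norm_add_le _ _
      _ ≤ M := by rw [hM_def]; linarith
  -- uniform positivity of the Hessian in the ball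
  have hHlow : ∀ x₁ : EuclideanSpace ℝ (Fin m), ‖x₁ - z‖ < r →
      ∀ u : EuclideanSpace ℝ (Fin m),
        3 * c / 4 * ‖u‖ ^ 2 ≤ ⟪fderiv ℝ (fun y => ∇ f y) x₁ u, u⟫ := by
    intro x₁ hx₁ u
    have h1 := hr₁p x₁ (by rw [dist_eq_norm]; exact lt_of_lt_of_le hx₁ hrr₁)
    have h2 : |⟪(fderiv ℝ (fun y => ∇ f y) x₁ - fderiv ℝ (fun y => ∇ f y) z) u, u⟫|
        ≤ ‖fderiv ℝ (fun y => ∇ f y) x₁ - fderiv ℝ (fun y => ∇ f y) z‖ * ‖u‖ * ‖u‖ :=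
      le_trans (abs_real_inner_le_norm _ _)
        (mul_le_mul_of_nonneg_right
          ((fderiv ℝ (fun y => ∇ f y) x₁ - fderiv ℝ (fun y => ∇ f y) z).le_opNorm u)
          (norm_nonneg _))
    have h3 : ⟪fderiv ℝ (fun y => ∇ f y) x₁ u, u⟫
        = ⟪fderiv ℝ (fun y => ∇ f y) z u, u⟫ +
          ⟪(fderiv ℝ (fun y => ∇ f y) x₁ - fderiv ℝ (fun y => ∇ f y) z) u, u⟫ := by
      rw [ContinuousLinearMap.sub_apply, inner_sub_left]; ring
    have h4 := hlow u
    have h5 := (abs_le.mp h2).1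
    nlinarith [mul_le_mul_of_nonneg_right (le_of_lt h1) (mul_self_nonneg ‖u‖),
      sq_nonneg ‖u‖]
  -- uniform positivity of the perturbed Hessians in the ball
  have hApos : ∀ x₁ : EuclideanSpace ℝ (Fin m), ‖x₁ - z‖ < r → ∀ j : Fin (m + 1),
      ∀ u : EuclideanSpace ℝ (Fin m),
      c / 2 * ‖u‖ ^ 2 ≤ ⟪(fderiv ℝ (fun y => ∇ f y) x₁ +
        (δs j * ‖∇ f x₁‖ ^ α) • ContinuousLinearMap.id ℝ (EuclideanSpace ℝ (Fin m))) u, u⟫ := by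
    intro x₁ hx₁ j u
    have h1 := hHlow x₁ hx₁ u
    have h2 : |δs j * ‖∇ f x₁‖ ^ α| ≤ D * ‖∇ f x₁‖ ^ α := by
      rw [abs_mul, abs_of_nonneg (Real.rpow_nonneg (norm_nonneg _) _)]
      exact mul_le_mul_of_nonneg_right (hD j) (Real.rpow_nonneg (norm_nonneg _) _)
    have h3 : D * ‖∇ f x₁‖ ^ α < c / 4 :=
      hr₂p x₁ (by rw [dist_eq_norm]; exact lt_of_lt_of_le hx₁ hrr₂)
    have h4 : ⟪(fderiv ℝ (fun y => ∇ f y) x₁ +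
        (δs j * ‖∇ f x₁‖ ^ α) • ContinuousLinearMap.id ℝ (EuclideanSpace ℝ (Fin m))) u, u⟫
        = ⟪fderiv ℝ (fun y => ∇ f y) x₁ u, u⟫ + (δs j * ‖∇ f x₁‖ ^ α) * ‖u‖ ^ 2 := by
      rw [ContinuousLinearMap.add_apply, inner_add_left, ContinuousLinearMap.smul_apply,
        ContinuousLinearMap.id_apply, real_inner_smul_left, real_inner_self_eq_norm_sq]
    have h5 := (abs_le.mp h2).1
    nlinarith [sq_nonneg ‖u‖,
      mul_le_mul_of_nonneg_right (le_of_lt (lt_of_le_of_lt h2 h3)) (sq_nonneg ‖u‖),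
      neg_abs_le (δs j * ‖∇ f x₁‖ ^ α),
      mul_le_mul_of_nonneg_right (neg_abs_le (δs j * ‖∇ f x₁‖ ^ α)) (sq_nonneg ‖u‖)]
  -- norms along segments
  have hseg : ∀ x₁ : EuclideanSpace ℝ (Fin m), ∀ y ∈ segment ℝ z x₁,
      ‖y - z‖ ≤ ‖x₁ - z‖ ∧ ‖y - x₁‖ ≤ ‖x₁ - z‖ := by
    intro x₁ y hy
    obtain ⟨a, b, ha, hb, hab, hy⟩ := hy
    have ha1 : a = 1 - b := by linarith
    have hb1 : b ≤ 1 := by linarith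
    have e1 : y - z = b • (x₁ - z) := by rw [← hy, ha1]; module
    have e2 : y - x₁ = a • (z - x₁) := by rw [← hy, ha1]; module
    constructor
    · rw [e1, norm_smul, Real.norm_eq_abs, abs_of_nonneg hb]
      exact mul_le_of_le_one_left (norm_nonneg _) hb1
    · rw [e2, norm_smul, Real.norm_eq_abs, abs_of_nonneg ha, norm_sub_rev]
      exact mul_le_of_le_one_left (norm_nonneg _) (by linarith)
  -- Taylor estimate for the gradient
  have hTaylor : ∀ x₁ : EuclideanSpace ℝ (Fin m), ‖x₁ - z‖ < r →
      ‖∇ f x₁ - fderiv ℝ (fun y => ∇ f y) x₁ (x₁ - z)‖ ≤ (K : ℝ) * ‖x₁ - z‖ ^ 2 := by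
    intro x₁ hx₁
    have hconv : Convex ℝ (segment ℝ z x₁) := convex_segment z x₁
    have hsub : segment ℝ z x₁ ⊆ t := by
      intro y hy
      apply hr₃t
      rw [Metric.mem_ball, dist_eq_norm]
      exact lt_of_le_of_lt (hseg x₁ y hy).1 (lt_of_lt_of_le hx₁ hrr₃)
    have hder : ∀ y ∈ segment ℝ z x₁, HasFDerivWithinAt (fun y' => ∇ f y')
        (fderiv ℝ (fun y' => ∇ f y') y) (segment ℝ z x₁) y :=
      fun y _ => (hGdiff y).hasFDerivAt.hasFDerivWithinAt
    have hbound : ∀ y ∈ segment ℝ z x₁,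
        ‖fderiv ℝ (fun y' => ∇ f y') y - fderiv ℝ (fun y' => ∇ f y') x₁‖
          ≤ (K : ℝ) * ‖x₁ - z‖ := by
      intro y hy
      have h1 : dist (fderiv ℝ (fun y' => ∇ f y') y) (fderiv ℝ (fun y' => ∇ f y') x₁)
          ≤ (K : ℝ) * dist y x₁ :=
        hKlip.dist_le_mul y (hsub hy) x₁ (hsub (right_mem_segment ℝ z x₁))
      rw [dist_eq_norm, dist_eq_norm] at h1
      exact le_trans h1 (mul_le_mul_of_nonneg_left (hseg x₁ y hy).2 K.2)
    have hest := hconv.norm_image_sub_le_of_norm_hasFDerivWithin_le' hder hbound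
      (left_mem_segment ℝ z x₁) (right_mem_segment ℝ z x₁)
    rw [hz, sub_zero] at hest
    calc ‖∇ f x₁ - fderiv ℝ (fun y => ∇ f y) x₁ (x₁ - z)‖
        ≤ (K : ℝ) * ‖x₁ - z‖ * ‖x₁ - z‖ := hest
      _ = (K : ℝ) * ‖x₁ - z‖ ^ 2 := by ring
  -- gradient linear bound
  have hGlin : ∀ x₁ : EuclideanSpace ℝ (Fin m), ‖x₁ - z‖ < r →
      ‖∇ f x₁‖ ≤ (M + (K : ℝ)) * ‖x₁ - z‖ := by
    intro x₁ hx₁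
    have h1 := hTaylor x₁ hx₁
    have h2 : ‖fderiv ℝ (fun y => ∇ f y) x₁ (x₁ - z)‖ ≤ M * ‖x₁ - z‖ :=
      le_trans ((fderiv ℝ (fun y => ∇ f y) x₁).le_opNorm _)
        (mul_le_mul_of_nonneg_right (hMb x₁ hx₁) (norm_nonneg _))
    have h3 : ‖∇ f x₁‖ ≤ ‖∇ f x₁ - fderiv ℝ (fun y => ∇ f y) x₁ (x₁ - z)‖ +
        ‖fderiv ℝ (fun y => ∇ f y) x₁ (x₁ - z)‖ := by
      nth_rewrite 1 [show ∇ f x₁ = (∇ f x₁ - fderiv ℝ (fun y => ∇ f y) x₁ (x₁ - z)) +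
        fderiv ℝ (fun y => ∇ f y) x₁ (x₁ - z) by abel]
      exact norm_add_le _ _
    have h4 : ‖x₁ - z‖ ≤ 1 := le_of_lt (lt_of_lt_of_le hx₁ hr1)
    nlinarith [norm_nonneg (x₁ - z), NNReal.coe_nonneg K,
      mul_le_mul_of_nonneg_left h4 (mul_nonneg (NNReal.coe_nonneg K) (norm_nonneg (x₁ - z)))]
  -- in the ball, the only critical point is z
  have hcrit : ∀ x₁ : EuclideanSpace ℝ (Fin m), ‖x₁ - z‖ < r → ∇ f x₁ = 0 → x₁ = z := by
    intro x₁ hx₁ hG0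
    by_contra hne
    have hd : x₁ - z ≠ 0 := sub_ne_zero.mpr hne
    have hdn : 0 < ‖x₁ - z‖ := norm_pos_iff.mpr hd
    have h1 := hTaylor x₁ hx₁
    rw [hG0, zero_sub, norm_neg] at h1
    have h2 := hHlow x₁ hx₁ (x₁ - z)
    have h3 : ⟪fderiv ℝ (fun y => ∇ f y) x₁ (x₁ - z), x₁ - z⟫
        ≤ ‖fderiv ℝ (fun y => ∇ f y) x₁ (x₁ - z)‖ * ‖x₁ - z‖ := real_inner_le_norm _ _
    have h5 : ((K : ℝ) + 1) * ‖x₁ - z‖ < c / 2 := by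
      have : ‖x₁ - z‖ < c / (2 * ((K : ℝ) + 1)) := lt_of_lt_of_le hx₁ hrK
      calc ((K : ℝ) + 1) * ‖x₁ - z‖ < ((K : ℝ) + 1) * (c / (2 * ((K : ℝ) + 1))) :=
            mul_lt_mul_of_pos_left this hKpos
        _ = c / 2 := by field_simp
    have hd2 : 0 < ‖x₁ - z‖ ^ 2 := pow_pos hdn 2
    nlinarith [mul_le_mul_of_nonneg_right h1 (le_of_lt hdn),
      mul_lt_mul_of_pos_right h5 hd2, hd2, NNReal.coe_nonneg K]
  -- constants
  set C₀ : ℝ := 2 / c * ((K : ℝ) + D * (M + (K : ℝ))) with hC₀_def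
  have hC₀0 : 0 ≤ C₀ := by positivity
  set C : ℝ := C₀ + 1 with hC_def
  have hC0 : 0 < C := by positivity
  clear_value C₀ C
  -- the key one-step estimate
  have hstep : ∀ x₁ : EuclideanSpace ℝ (Fin m), ‖x₁ - z‖ < r → ∇ f x₁ ≠ 0 →
      ∀ j : Fin (m + 1), ∀ w : EuclideanSpace ℝ (Fin m),
      AbsInvApply (fderiv ℝ (fun y => ∇ f y) x₁ +
        (δs j * ‖∇ f x₁‖ ^ α) • ContinuousLinearMap.id ℝ (EuclideanSpace ℝ (Fin m)))
        (∇ f x₁) w →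
      ‖x₁ - z - w‖ ≤ C₀ * ‖x₁ - z‖ ^ 2 := by
    intro x₁ hx₁ hG0 j w habs
    set A : EuclideanSpace ℝ (Fin m) →L[ℝ] EuclideanSpace ℝ (Fin m) :=
      fderiv ℝ (fun y => ∇ f y) x₁ +
        (δs j * ‖∇ f x₁‖ ^ α) • ContinuousLinearMap.id ℝ (EuclideanSpace ℝ (Fin m)) with hA_def
    have hA_sym : ∀ u v : EuclideanSpace ℝ (Fin m), ⟪A u, v⟫ = ⟪u, A v⟫ := by
      intro u v
      simp only [hA_def, ContinuousLinearMap.add_apply, ContinuousLinearMap.smul_apply,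
        ContinuousLinearMap.id_apply, inner_add_left, inner_add_right,
        real_inner_smul_left, real_inner_smul_right]
      rw [hessian_symm f hf x₁ u v]
    have hA_pos : ∀ u : EuclideanSpace ℝ (Fin m), u ≠ 0 → 0 < ⟪A u, u⟫ := by
      intro u hu
      have h1 := hApos x₁ hx₁ j u
      have h2 : 0 < ‖u‖ := norm_pos_iff.mpr hu
      calc (0 : ℝ) < c / 2 * ‖u‖ ^ 2 := by positivity
        _ ≤ ⟪A u, u⟫ := h1
    obtain ⟨P, hPsym, hPpos, hPsq, hPw⟩ := habs
    have hPA : P = A := posdef_sqrt_unique P A hPsym hPpos hA_sym hA_pos hPsq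
    have hAw : A w = ∇ f x₁ := by rw [← hPA]; exact hPw
    set d : EuclideanSpace ℝ (Fin m) := x₁ - z with hd_def
    have hAu : A (d - w) = (fderiv ℝ (fun y => ∇ f y) x₁ d - ∇ f x₁) +
        (δs j * ‖∇ f x₁‖ ^ α) • d := by
      rw [map_sub, hAw]
      simp only [hA_def, ContinuousLinearMap.add_apply, ContinuousLinearMap.smul_apply,
        ContinuousLinearMap.id_apply]
      abel
    have hGα : ‖∇ f x₁‖ ^ α ≤ ‖∇ f x₁‖ := by
      have h1 : 0 < ‖∇ f x₁‖ := norm_pos_iff.mpr hG0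
      have h2 : ‖∇ f x₁‖ ≤ 1 :=
        hr₄p x₁ (by rw [dist_eq_norm]; exact lt_of_lt_of_le hx₁ hrr₄)
      calc ‖∇ f x₁‖ ^ α ≤ ‖∇ f x₁‖ ^ (1 : ℝ) :=
            Real.rpow_le_rpow_of_exponent_ge h1 h2 (le_of_lt hα)
        _ = ‖∇ f x₁‖ := Real.rpow_one _
    have hAu_norm : ‖A (d - w)‖ ≤ ((K : ℝ) + D * (M + (K : ℝ))) * ‖d‖ ^ 2 := by
      rw [hAu]
      have h1 : ‖fderiv ℝ (fun y => ∇ f y) x₁ d - ∇ f x₁‖ ≤ (K : ℝ) * ‖d‖ ^ 2 := by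
        rw [norm_sub_rev]
        exact hTaylor x₁ hx₁
      have h2 : ‖(δs j * ‖∇ f x₁‖ ^ α) • d‖ ≤ D * (M + (K : ℝ)) * ‖d‖ ^ 2 := by
        rw [norm_smul, Real.norm_eq_abs, abs_mul,
          abs_of_nonneg (Real.rpow_nonneg (norm_nonneg _) _)]
        have h3 : |δs j| * ‖∇ f x₁‖ ^ α ≤ D * ((M + (K : ℝ)) * ‖d‖) := by
          calc |δs j| * ‖∇ f x₁‖ ^ α ≤ D * ‖∇ f x₁‖ :=
                mul_le_mul (hD j) hGα (Real.rpow_nonneg (norm_nonneg _) _)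
                  (le_of_lt hD0)
            _ ≤ D * ((M + (K : ℝ)) * ‖d‖) :=
                mul_le_mul_of_nonneg_left (hGlin x₁ hx₁) (le_of_lt hD0)
        calc |δs j| * ‖∇ f x₁‖ ^ α * ‖d‖ ≤ D * ((M + (K : ℝ)) * ‖d‖) * ‖d‖ :=
              mul_le_mul_of_nonneg_right h3 (norm_nonneg _)
          _ = D * (M + (K : ℝ)) * ‖d‖ ^ 2 := by ring
      calc ‖fderiv ℝ (fun y => ∇ f y) x₁ d - ∇ f x₁ + (δs j * ‖∇ f x₁‖ ^ α) • d‖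
          ≤ ‖fderiv ℝ (fun y => ∇ f y) x₁ d - ∇ f x₁‖ + ‖(δs j * ‖∇ f x₁‖ ^ α) • d‖ :=
            norm_add_le _ _
        _ ≤ ((K : ℝ) + D * (M + (K : ℝ))) * ‖d‖ ^ 2 := by linarith
    have hlow2 : c / 2 * ‖d - w‖ ^ 2 ≤ ⟪A (d - w), d - w⟫ := hApos x₁ hx₁ j (d - w)
    have hub : ⟪A (d - w), d - w⟫ ≤ ‖A (d - w)‖ * ‖d - w‖ := real_inner_le_norm _ _
    rcases eq_or_ne (d - w) 0 with h0 | h0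
    · rw [show x₁ - z - w = d - w from rfl, h0, norm_zero]
      positivity
    · have hdw : 0 < ‖d - w‖ := norm_pos_iff.mpr h0
      have key : c / 2 * ‖d - w‖ ≤ ((K : ℝ) + D * (M + (K : ℝ))) * ‖d‖ ^ 2 := by
        have h1 : c / 2 * ‖d - w‖ * ‖d - w‖ ≤ ‖A (d - w)‖ * ‖d - w‖ := by
          nlinarith
        have h2 := le_of_mul_le_mul_right h1 hdw
        exact le_trans h2 hAu_norm
      calc ‖d - w‖ = 2 / c * (c / 2 * ‖d - w‖) := by
            rw [show (2 : ℝ) / c * (c / 2 * ‖d - w‖) = c / c * ‖d - w‖ by ring,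
              div_self (ne_of_gt hc), one_mul]
        _ ≤ 2 / c * (((K : ℝ) + D * (M + (K : ℝ))) * ‖d‖ ^ 2) :=
            mul_le_mul_of_nonneg_left key (by positivity)
        _ = C₀ * ‖d‖ ^ 2 := by rw [hC₀_def]; ring
  -- conclusion
  have hεC0 : (0 : ℝ) < 1 / (2 * C) := by positivity
  refine ⟨min r (1 / (2 * C)), lt_min hr hεC0, C, hC0, fun x hx0 hseqx => ?_⟩
  set ε : ℝ := min r (1 / (2 * C)) with hε_def
  have hε0 : 0 < ε := lt_min hr hεC0
  have hεr : ε ≤ r := min_le_left _ _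
  have hεC : ε ≤ 1 / (2 * C) := min_le_right _ _
  have key : ∀ n, ‖x n - z‖ < ε →
      ‖x (n + 1) - z‖ ≤ C * ‖x n - z‖ ^ 2 ∧ ‖x (n + 1) - z‖ ≤ 1 / 2 * ‖x n - z‖ := by
    intro n hn
    have hnr : ‖x n - z‖ < r := lt_of_lt_of_le hn hεr
    rcases eq_or_ne (∇ f (x n)) 0 with hg | hg
    · have hxz : x n = z := hcrit (x n) hnr hg
      have hx1 : x (n + 1) = x n := (hseqx n).1 hg
      rw [hx1, hxz, sub_self, norm_zero]
      constructor <;> norm_num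
    · obtain ⟨j, w, _, _, habs, hstep1⟩ := (hseqx n).2 hg
      have h1 : ‖x (n + 1) - z‖ ≤ C₀ * ‖x n - z‖ ^ 2 := by
        rw [hstep1, sub_right_comm]
        exact hstep (x n) hnr hg j w habs
      have h2 : ‖x (n + 1) - z‖ ≤ C * ‖x n - z‖ ^ 2 := by
        have := mul_le_mul_of_nonneg_right (show C₀ ≤ C by rw [hC_def]; linarith)
          (sq_nonneg ‖x n - z‖)
        linarith
      refine ⟨h2, ?_⟩
      have h3 : C * ‖x n - z‖ ^ 2 ≤ C * ε * ‖x n - z‖ := by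
        have h3' : C * ‖x n - z‖ * ‖x n - z‖ ≤ C * ε * ‖x n - z‖ :=
          mul_le_mul_of_nonneg_right
            (mul_le_mul_of_nonneg_left (le_of_lt hn) (le_of_lt hC0)) (norm_nonneg _)
        calc C * ‖x n - z‖ ^ 2 = C * ‖x n - z‖ * ‖x n - z‖ := by ring
          _ ≤ C * ε * ‖x n - z‖ := h3'
      have h4 : C * ε ≤ 1 / 2 := by
        calc C * ε ≤ C * (1 / (2 * C)) := mul_le_mul_of_nonneg_left hεC (le_of_lt hC0)
          _ = 1 / 2 := by
            rw [show C * (1 / (2 * C)) = C / C * (1 / 2) by ring,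
              div_self (ne_of_gt hC0), one_mul]
      calc ‖x (n + 1) - z‖ ≤ C * ‖x n - z‖ ^ 2 := h2
        _ ≤ C * ε * ‖x n - z‖ := h3
        _ ≤ 1 / 2 * ‖x n - z‖ := mul_le_mul_of_nonneg_right h4 (norm_nonneg _)
  have hball : ∀ n, ‖x n - z‖ < ε := by
    intro n
    induction n with
    | zero => exact hx0
    | succ n ih => linarith [(key n ih).2, ih, hε0, norm_nonneg (x n - z)]
  have hgeo : ∀ n, ‖x n - z‖ ≤ (1 / 2 : ℝ) ^ n * ‖x 0 - z‖ := by
    intro n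
    induction n with
    | zero => simp
    | succ n ih =>
      calc ‖x (n + 1) - z‖ ≤ 1 / 2 * ‖x n - z‖ := (key n (hball n)).2
        _ ≤ 1 / 2 * ((1 / 2 : ℝ) ^ n * ‖x 0 - z‖) := by linarith
        _ = (1 / 2 : ℝ) ^ (n + 1) * ‖x 0 - z‖ := by ring
  constructor
  · rw [tendsto_iff_norm_sub_tendsto_zero]
    apply squeeze_zero (fun n => norm_nonneg _) hgeo
    have hpow : Filter.Tendsto (fun n : ℕ => (1 / 2 : ℝ) ^ n) Filter.atTop (nhds 0) :=
      tendsto_pow_atTop_nhds_zero_of_lt_one (by norm_num) (by norm_num)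
    simpa using hpow.mul_const ‖x 0 - z‖
  · exact fun n => (key n (hball n)).1
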